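/- There exist σ > 0, L > 0 and s₁ > 0 such that for every s₀ ≥ s₁, every t ≥ s₀, and all continuous functions X, Y : [s₀,t] → ℝ satisfying X(s) ≥ (m(t)/t)·s − s^{(1+ε)/2} and |Y(s)| ≤ σ·s for every s ∈ [s₀, t], one has ∫_{s₀}^t b(θ(X(s), Y(s))) ds ≥ (t − s₀) − β ∫_{s₀}^t |Y(s)/(√2·s)|^α · (1 + min(L·(|Y(s)/s|^{2−α} + s^{−(1−ε)/2}), 1)) ds. -/

import Mathlib

open MeasureTheory

set_option maxHeartbeats 1000000

/-- The angular coordinate of the point `(x, y) ∈ ℝ²`, valued in `(-π, π]`. -/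
noncomputable def angle (x y : ℝ) : ℝ := Complex.arg ((x : ℂ) + (y : ℂ) * Complex.I)

/-- The constant `ϑ₁ = λ₀ β^{2/(2+α)} 2^{-2α/(2+α)} / (1-κ)` with `κ = 2α/(2+α)`. -/
noncomputable def theta1 (α β lam₀ : ℝ) : ℝ :=
  lam₀ * β ^ (2 / (2 + α)) * (2:ℝ) ^ (-(2 * α / (2 + α))) / (1 - 2 * α / (2 + α))

/-- The centering `m(t) = √2 t - (ϑ₁/√2) t^{(2-α)/(2+α)} - (3/(2√2) - α/(2√2(2+α))) log t`. -/
noncomputable def mCenter (α β lam₀ t : ℝ) : ℝ :=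
  Real.sqrt 2 * t - theta1 α β lam₀ / Real.sqrt 2 * t ^ ((2 - α) / (2 + α))
    - (3 / (2 * Real.sqrt 2) - α / (2 * Real.sqrt 2 * (2 + α))) * Real.log t

lemma rpow_base_le_of_le {a b c : ℝ} (h1 : 1 ≤ a) (hab : a ≤ b) (hc : c ≤ 0) :
    b ^ c ≤ a ^ c := by
  have ha : (0:ℝ) < a := lt_of_lt_of_le one_pos h1
  have hb : (0:ℝ) < b := ha.trans_le hab
  rw [show c = -(-c) by ring, Real.rpow_neg hb.le, Real.rpow_neg ha.le]
  exact inv_anti₀ (Real.rpow_pos_of_pos ha _)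
    (Real.rpow_le_rpow ha.le hab (neg_nonneg.2 hc))

lemma abs_angle_le {x y : ℝ} (hx : 0 < x) : |angle x y| ≤ |y| / x := by
  set z : ℂ := (x : ℂ) + (y : ℂ) * Complex.I with hz
  have hre : z.re = x := by simp [hz]
  have him : z.im = y := by simp [hz]
  have h2 : |Complex.arg z| < Real.pi / 2 :=
    Complex.abs_arg_lt_pi_div_two_iff.2 (Or.inl (by rw [hre]; exact hx))
  have htan : Real.tan (Complex.arg z) = y / x := by
    rw [Complex.tan_arg, hre, him]
  have h4 : |Complex.arg z| ≤ Real.tan |Complex.arg z| :=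
    Real.le_tan (abs_nonneg _) h2
  have h5 : Real.tan |Complex.arg z| ≤ |y| / x := by
    rcases le_or_gt 0 (Complex.arg z) with h | h
    · rw [abs_of_nonneg h, htan]
      calc y / x ≤ |y / x| := le_abs_self _
        _ = |y| / x := by rw [abs_div, abs_of_pos hx]
    · rw [abs_of_neg h, Real.tan_neg, htan]
      calc -(y / x) ≤ |y / x| := neg_le_abs _
        _ = |y| / x := by rw [abs_div, abs_of_pos hx]
  calc |angle x y| = |Complex.arg z| := rfl
    _ ≤ Real.tan |Complex.arg z| := h4
    _ ≤ |y| / x := h5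

lemma r_sq_bound {r δ : ℝ} (hδ0 : 0 ≤ δ) (hδ : δ ≤ 1/2) (hr0 : 0 ≤ r)
    (hr : r * (1 - δ) ≤ 1) : r ^ 2 ≤ 1 + 6 * δ := by
  nlinarith [mul_nonneg (mul_nonneg hδ0 (by linarith : (0:ℝ) ≤ 1 - 2*δ))
      (by linarith : (0:ℝ) ≤ 4 - 3*δ), mul_nonneg hr0 hδ0, sq_nonneg (r*(1-δ)),
    mul_le_mul hr hr (by nlinarith) (by norm_num)]

/-- Lower bound on the branching rate along trajectories staying above
`s ↦ (m(t)/t) s - s^{(1+ε)/2}` with `|Y_s| ≤ σ s`: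
`∫_{s₀}^t b(θ_s) ds ≥ (t - s₀)
  - β ∫_{s₀}^t |Y_s/(√2 s)|^α (1 + min(L(|Y_s/s|^{2-α} + s^{-(1-ε)/2}), 1)) ds`. -/
theorem branching_rate_lower_bound (α β : ℝ)
    (hα : α ∈ Set.Ioo (2/3 : ℝ) 2) (hβ : 0 < β)
    (b : ℝ → ℝ) (hb_meas : Measurable b)
    (hb_range : ∀ θ : ℝ, b θ ∈ Set.Icc (0:ℝ) 1)
    (hb_per : ∀ θ : ℝ, b (θ + 2 * Real.pi) = b θ)
    (hA1 : ∀ ε ∈ Set.Ioc (0:ℝ) Real.pi, ∃ c : ℝ, c < 1 ∧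
      ∀ θ ∈ Set.Icc (-Real.pi) Real.pi, ε ≤ |θ| → b θ ≤ c)
    (hA2 : ∃ K : ℝ, 0 < K ∧ ∃ σ₀ : ℝ, 0 < σ₀ ∧
      ∀ θ : ℝ, |θ| ≤ σ₀ → |b θ - (1 - β * |θ| ^ α)| ≤ K * θ ^ 2)
    (lam₀ : ℝ) (hlam₀ : 0 < lam₀)
    (hground : ∃ φ₀ : ℝ → ℝ, ContDiff ℝ 2 φ₀ ∧ (∀ x : ℝ, 0 < φ₀ x) ∧
      (∫ x : ℝ, (φ₀ x) ^ 2) = 1 ∧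
      ∀ x : ℝ, -(deriv (deriv φ₀) x) + |x| ^ α * φ₀ x = lam₀ * φ₀ x)
    (ε : ℝ) (hε : ε ∈ Set.Ioo (0:ℝ) (2 * (2 * α / (2 + α)) - 1)) :
    ∃ σ : ℝ, 0 < σ ∧ ∃ L : ℝ, 0 < L ∧ ∃ s₁ : ℝ, 0 < s₁ ∧
      ∀ s₀ t : ℝ, s₁ ≤ s₀ → s₀ ≤ t →
      ∀ X Y : ℝ → ℝ,
        ContinuousOn X (Set.Icc s₀ t) → ContinuousOn Y (Set.Icc s₀ t) →
        (∀ s ∈ Set.Icc s₀ t,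
          (mCenter α β lam₀ t / t) * s - s ^ ((1 + ε) / 2) ≤ X s ∧ |Y s| ≤ σ * s) →
        (t - s₀) - β * (∫ s in s₀..t, |Y s / (Real.sqrt 2 * s)| ^ α *
            (1 + min (L * (|Y s / s| ^ (2 - α) + s ^ (-((1 - ε) / 2)))) 1))
          ≤ ∫ s in s₀..t, b (angle (X s) (Y s)) := by
  obtain ⟨K, hK, σ₀, hσ₀, hA2'⟩ := hA2
  obtain ⟨hα23, hα2⟩ := hα
  have hα0 : (0:ℝ) < α := by linarith
  have h2α : (0:ℝ) < 2 + α := by linarith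
  have h2mα : (0:ℝ) < 2 - α := by linarith
  have hε0 : 0 < ε := hε.1
  have hεκ : ε < 2 * (2 * α / (2 + α)) - 1 := hε.2
  have hκ : 2 * α / (2 + α) < 1 := by rw [div_lt_one h2α]; linarith
  have hε1 : ε < 1 := by linarith
  have hκhalf : 1/2 < 2 * α / (2 + α) := by linarith
  set p : ℝ := (1 - ε) / 2 with hpdef
  have hp0 : 0 < p := by rw [hpdef]; linarith
  have hphalf : p ≤ 1/2 := by rw [hpdef]; linarith
  have hs2 : (1:ℝ) ≤ Real.sqrt 2 := by
    have h := Real.sqrt_le_sqrt (show (1:ℝ) ≤ 2 by norm_num)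
    rwa [Real.sqrt_one] at h
  have hs2pos : (0:ℝ) < Real.sqrt 2 := lt_of_lt_of_le one_pos hs2
  have hϑ : 0 < theta1 α β lam₀ := by
    unfold theta1
    apply div_pos
    · positivity
    · linarith
  set ϑ : ℝ := theta1 α β lam₀ with hϑdef
  set C₀ : ℝ := ϑ + 5 with hC₀def
  have hC₀ : 0 < C₀ := by rw [hC₀def]; linarith
  have hKβ : 0 < 4 * K / β := by positivity
  set L : ℝ := 6 * C₀ + 4 * K / β + 1 with hLdef
  have hL : 0 < L := by rw [hLdef]; linarith
  set σ : ℝ := min (min (σ₀/2) 1) ((2*L) ^ (-(1/(2-α))) : ℝ) with hσdef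
  have hσpos : 0 < σ :=
    lt_min (lt_min (by linarith) one_pos) (Real.rpow_pos_of_pos (by linarith) _)
  set M : ℝ := 2*C₀ + 2*L + 2 with hMdef
  have hM : 0 < M := by rw [hMdef]; linarith
  set s₁ : ℝ := max (Real.exp 1) (M ^ (1/p : ℝ)) with hs₁def
  have he1 : (1:ℝ) ≤ Real.exp 1 := by
    calc (1:ℝ) = Real.exp 0 := Real.exp_zero.symm
      _ ≤ Real.exp 1 := Real.exp_le_exp.2 zero_le_one
  have hs₁1 : 1 ≤ s₁ := le_trans he1 (le_max_left _ _)
  have hs₁pos : 0 < s₁ := by linarith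
  refine ⟨σ, hσpos, L, hL, s₁, hs₁pos, ?_⟩
  intro s₀ t hs₁s₀ hst X Y hXc hYc hB
  set cα : ℝ := 3/(2*Real.sqrt 2) - α/(2*Real.sqrt 2*(2+α)) with hcαdef
  have hcαeq : cα = (6 + 2*α)/(2*Real.sqrt 2*(2+α)) := by
    rw [hcαdef]; field_simp; ring
  have hcα0 : 0 ≤ cα := by rw [hcαeq]; positivity
  have hcα2 : cα ≤ 2 := by
    rw [hcαeq, div_le_iff₀ (by positivity)]
    have h1 : 1 * (2 + α) ≤ Real.sqrt 2 * (2 + α) :=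
      mul_le_mul_of_nonneg_right hs2 h2α.le
    linarith
  have ht1 : 1 ≤ t := le_trans hs₁1 (le_trans hs₁s₀ hst)
  have ht0 : 0 < t := by linarith
  -- pointwise bound
  have key : ∀ s ∈ Set.Icc s₀ t,
      1 - β * (|Y s / (Real.sqrt 2 * s)| ^ α *
        (1 + min (L * (|Y s / s| ^ (2 - α) + s ^ (-p))) 1)) ≤ b (angle (X s) (Y s)) := by
    intro s hs
    obtain ⟨hXlb', hYb⟩ := hB s hs
    have hss₀ : s₀ ≤ s := hs.1
    have hsts : s ≤ t := hs.2
    have hs1 : 1 ≤ s := le_trans hs₁1 (le_trans hs₁s₀ hss₀)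
    have hspos : 0 < s := by linarith
    set E : ℝ := s ^ (-p) with hEdef
    have hsE0 : 0 ≤ E := Real.rpow_nonneg hspos.le _
    have hMp : M ^ (1/p : ℝ) ≤ s := le_trans (le_max_right _ _) (le_trans hs₁s₀ hss₀)
    have hMs : M ≤ s ^ p := by
      calc M = (M ^ (1/p : ℝ)) ^ p := by
            rw [← Real.rpow_mul hM.le, one_div_mul_cancel hp0.ne', Real.rpow_one]
        _ ≤ s ^ p := Real.rpow_le_rpow (Real.rpow_nonneg hM.le _) hMp hp0.le
    have hE : E ≤ 1/M := by
      rw [hEdef, Real.rpow_neg hspos.le, one_div]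
      exact inv_anti₀ hM hMs
    have hδhalf : C₀ * E ≤ 1/2 := by
      have h1 : C₀ * E ≤ C₀ * (1/M) := mul_le_mul_of_nonneg_left hE hC₀.le
      have h2 : C₀ * (1/M) ≤ 1/2 := by
        rw [mul_one_div, div_le_iff₀ hM]
        rw [hMdef]; linarith
      linarith
    have hLEhalf : L * E ≤ 1/2 := by
      have h1 : L * E ≤ L * (1/M) := mul_le_mul_of_nonneg_left hE hL.le
      have h2 : L * (1/M) ≤ 1/2 := by
        rw [mul_one_div, div_le_iff₀ hM]
        rw [hMdef]; linarith
      linarith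
    -- lower bound for X s
    have hq1 : t ^ ((2-α)/(2+α)) / t ≤ E := by
      have e1 : t ^ ((2-α)/(2+α)) / t = t ^ ((2-α)/(2+α) - 1) := by
        rw [Real.rpow_sub ht0, Real.rpow_one]
      have e2 : (2-α)/(2+α) - 1 ≤ 0 := by
        have : (2-α)/(2+α) ≤ 1 := by rw [div_le_one h2α]; linarith
        linarith
      have e3 : (2-α)/(2+α) - 1 ≤ -p := by
        have e4 : (2-α)/(2+α) - 1 = -(2*α/(2+α)) := by field_simp; ring
        rw [e4]
        have : p ≤ 2*α/(2+α) := by linarith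
        linarith
      calc t ^ ((2-α)/(2+α)) / t = t ^ ((2-α)/(2+α) - 1) := e1
        _ ≤ s ^ ((2-α)/(2+α) - 1) := rpow_base_le_of_le hs1 hsts e2
        _ ≤ s ^ (-p) := Real.rpow_le_rpow_of_exponent_le hs1 e3
    have hlog1 : Real.log t / t ≤ 2 * E := by
      have hsqt : 0 < Real.sqrt t := Real.sqrt_pos.2 ht0
      have hsqs : 0 < Real.sqrt s := Real.sqrt_pos.2 hspos
      have hlt : Real.log t ≤ 2 * Real.sqrt t := by
        have h1 := Real.log_le_sub_one_of_pos hsqt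
        rw [Real.log_sqrt ht0.le] at h1
        linarith [Real.sqrt_nonneg t]
      have h2 : Real.log t / t ≤ 2 / Real.sqrt t := by
        rw [div_le_div_iff₀ ht0 hsqt]
        calc Real.log t * Real.sqrt t ≤ (2 * Real.sqrt t) * Real.sqrt t :=
              mul_le_mul_of_nonneg_right hlt (Real.sqrt_nonneg t)
          _ = 2 * t := by rw [mul_assoc, Real.mul_self_sqrt ht0.le]
      have h3 : 2 / Real.sqrt t ≤ 2 / Real.sqrt s := by
        rw [div_le_div_iff₀ hsqt hsqs]
        have := Real.sqrt_le_sqrt hsts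
        linarith
      have h4 : 2 / Real.sqrt s ≤ 2 * E := by
        have h5 : s ^ (-(1/2:ℝ)) ≤ s ^ (-p) := Real.rpow_le_rpow_of_exponent_le hs1 (by linarith)
        have h6 : 2 / Real.sqrt s = 2 * s ^ (-(1/2:ℝ)) := by
          rw [Real.sqrt_eq_rpow, Real.rpow_neg hspos.le]; ring
        rw [h6, hEdef]; linarith
      linarith
    have hXlb : Real.sqrt 2 * s * (1 - C₀ * E) ≤ X s := by
      have h2ne : Real.sqrt 2 ≠ 0 := ne_of_gt hs2pos
      have hexp : mCenter α β lam₀ t / t * s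
          = Real.sqrt 2 * s - ϑ / Real.sqrt 2 * (t ^ ((2-α)/(2+α)) / t) * s
            - cα * (Real.log t / t) * s := by
        unfold mCenter
        rw [← hϑdef, ← hcαdef]
        field_simp
      have hsE : s ^ ((1+ε)/2) = s * E := by
        rw [hEdef, show (1+ε)/2 = 1 + -p by rw [hpdef]; ring, Real.rpow_add hspos,
          Real.rpow_one]
      have h1 : ϑ / Real.sqrt 2 * (t ^ ((2-α)/(2+α)) / t) * s ≤ ϑ * (s * E) := by
        have e1 : ϑ / Real.sqrt 2 ≤ ϑ := div_le_self hϑ.le hs2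
        have e2 : 0 ≤ t ^ ((2-α)/(2+α)) / t := by positivity
        have e3 : ϑ / Real.sqrt 2 * (t ^ ((2-α)/(2+α)) / t) ≤ ϑ * E :=
          mul_le_mul e1 hq1 e2 hϑ.le
        calc ϑ / Real.sqrt 2 * (t ^ ((2-α)/(2+α)) / t) * s ≤ ϑ * E * s :=
              mul_le_mul_of_nonneg_right e3 hspos.le
          _ = ϑ * (s * E) := by ring
      have h2 : cα * (Real.log t / t) * s ≤ 4 * (s * E) := by
        have e2 : 0 ≤ Real.log t / t := div_nonneg (Real.log_nonneg ht1) ht0.le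
        calc cα * (Real.log t / t) * s ≤ 2 * (2 * E) * s :=
              mul_le_mul_of_nonneg_right (mul_le_mul hcα2 hlog1 e2 (by norm_num)) hspos.le
          _ = 4 * (s * E) := by ring
      have h3 : Real.sqrt 2 * s * (1 - C₀ * E) ≤ Real.sqrt 2 * s - C₀ * (s * E) := by
        have e1 : Real.sqrt 2 * s * (1 - C₀ * E)
            = Real.sqrt 2 * s - Real.sqrt 2 * (C₀ * (s * E)) := by ring
        have e2 : C₀ * (s * E) ≤ Real.sqrt 2 * (C₀ * (s * E)) := by
          have h0 : 0 ≤ C₀ * (s * E) := mul_nonneg hC₀.le (mul_nonneg hspos.le hsE0)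
          have h1 := mul_le_mul_of_nonneg_right hs2 h0
          linarith
        linarith
      have h4 : Real.sqrt 2 * s - C₀ * (s * E)
          ≤ mCenter α β lam₀ t / t * s - s ^ ((1+ε)/2) := by
        rw [hexp, hsE]
        have : C₀ * (s * E) = ϑ * (s * E) + 5 * (s * E) := by rw [hC₀def]; ring
        have hsE0' : 0 ≤ s * E := mul_nonneg hspos.le hsE0
        linarith
      exact le_trans h3 (le_trans h4 hXlb')
    have hXhalf : Real.sqrt 2 * s / 2 ≤ X s := by
      have h := mul_le_mul_of_nonneg_left (show (1:ℝ)/2 ≤ 1 - C₀ * E by linarith)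
        (mul_nonneg hs2pos.le hspos.le)
      calc Real.sqrt 2 * s / 2 = Real.sqrt 2 * s * (1/2) := by ring
        _ ≤ Real.sqrt 2 * s * (1 - C₀ * E) := h
        _ ≤ X s := hXlb
    have hXpos : 0 < X s := lt_of_lt_of_le (by positivity) hXhalf
    have hθ : |angle (X s) (Y s)| ≤ |Y s| / X s := abs_angle_le hXpos
    rcases eq_or_ne (Y s) 0 with hy0 | hy0
    · -- Y s = 0
      have hb0 : b 0 = 1 := by
        have h := hA2' 0 (by simp [hσ₀.le])
        rw [abs_zero, Real.zero_rpow hα0.ne'] at h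
        have h' : |b 0 - 1| ≤ 0 := by
          calc |b 0 - 1| = |b 0 - (1 - β * 0)| := by norm_num
            _ ≤ K * 0 ^ 2 := h
            _ = 0 := by ring
        have := abs_nonpos_iff.mp h'
        linarith [sub_eq_zero.mp this]
      have hθ0 : angle (X s) (Y s) = 0 := by
        rw [hy0]
        unfold angle
        simp [Complex.arg_ofReal_of_nonneg hXpos.le]
      rw [hθ0, hb0, hy0]
      simp [Real.zero_rpow hα0.ne']
    · -- main case
      have hsqs : 0 < Real.sqrt 2 * s := by positivity
      have hys : 0 < |Y s| := abs_pos.2 hy0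
      set a : ℝ := |Y s| / (Real.sqrt 2 * s) with hadef
      set w : ℝ := |Y s| / s with hwdef
      have ha0 : 0 < a := div_pos hys hsqs
      have hw0 : 0 < w := div_pos hys hspos
      have haw : a ≤ w := by
        rw [hadef, hwdef]
        apply div_le_div_of_nonneg_left hys.le hspos
        have h1 := mul_le_mul_of_nonneg_right hs2 hspos.le
        linarith
      have hwσ : w ≤ σ := by rw [hwdef, div_le_iff₀ hspos]; linarith
      have habs1 : |Y s / (Real.sqrt 2 * s)| = a := by
        rw [abs_div, abs_of_pos hsqs]
      have habs2 : |Y s / s| = w := by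
        rw [abs_div, abs_of_pos hspos]
      set θv : ℝ := angle (X s) (Y s) with hθvdef
      have hθ2a : |θv| ≤ 2 * a := by
        have h1 : |Y s| / X s ≤ |Y s| / (Real.sqrt 2 * s / 2) :=
          div_le_div_of_nonneg_left hys.le (by positivity) hXhalf
        have h2 : |Y s| / (Real.sqrt 2 * s / 2) = 2 * a := by
          rw [hadef]; field_simp
        calc |θv| ≤ |Y s| / X s := hθ
          _ ≤ |Y s| / (Real.sqrt 2 * s / 2) := h1
          _ = 2 * a := h2
      have hθσ₀ : |θv| ≤ σ₀ := by
        have hσσ₀ : σ ≤ σ₀ / 2 := le_trans (min_le_left _ _) (min_le_left _ _)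
        linarith
      have hbθ := hA2' θv hθσ₀
      have hbθ' : 1 - β * |θv| ^ α - K * θv ^ 2 ≤ b θv := by
        have := (abs_le.1 hbθ).1
        linarith
      set A : ℝ := a ^ α with hAdef
      have hA0 : 0 ≤ A := Real.rpow_nonneg ha0.le _
      set G : ℝ := w ^ (2 - α) with hGdef
      have hG0 : 0 ≤ G := Real.rpow_nonneg hw0.le _
      -- claim 1
      have hclaim1 : |θv| ^ α ≤ A * (1 + 6 * (C₀ * E)) := by
        set r : ℝ := Real.sqrt 2 * s / X s with hrdef
        have hr0 : 0 ≤ r := by positivity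
        have hra : |Y s| / X s = a * r := by
          rw [hadef, hrdef]; field_simp
        have step1 : |θv| ^ α ≤ (a * r) ^ α := by
          rw [← hra]; exact Real.rpow_le_rpow (abs_nonneg _) hθ hα0.le
        have step2 : (a * r) ^ α = A * r ^ α := by
          rw [Real.mul_rpow ha0.le hr0, hAdef]
        have hr1 : r * (1 - C₀ * E) ≤ 1 := by
          rw [hrdef, div_mul_eq_mul_div, div_le_one hXpos]
          calc Real.sqrt 2 * s * (1 - C₀ * E) ≤ X s := hXlb
            _ = X s * 1 := (mul_one _).symm
            _ = X s := mul_one _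
        have hrα : r ^ α ≤ 1 + 6 * (C₀ * E) := by
          rcases le_or_gt r 1 with h | h
          · have h1 : r ^ α ≤ 1 := Real.rpow_le_one hr0 h hα0.le
            linarith [mul_nonneg hC₀.le hsE0]
          · calc r ^ α ≤ r ^ (2:ℝ) := Real.rpow_le_rpow_of_exponent_le h.le hα2.le
              _ = r ^ 2 := Real.rpow_two r
              _ ≤ 1 + 6 * (C₀ * E) := r_sq_bound (mul_nonneg hC₀.le hsE0) hδhalf hr0 hr1
        calc |θv| ^ α ≤ (a * r) ^ α := step1
          _ = A * r ^ α := step2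
          _ ≤ A * (1 + 6 * (C₀ * E)) := mul_le_mul_of_nonneg_left hrα hA0
      -- claim 2
      have hclaim2 : θv ^ 2 ≤ 4 * (A * G) := by
        have h1 : θv ^ 2 ≤ (2 * a) ^ 2 := by
          have h0 := sq_abs θv
          have h2 : |θv| ^ 2 ≤ (2 * a) ^ 2 :=
            pow_le_pow_left₀ (abs_nonneg θv) hθ2a 2
          linarith
        have h2 : A * a ^ (2 - α) = a ^ (2:ℝ) := by
          rw [hAdef, ← Real.rpow_add ha0]; norm_num
        have h3 : a ^ (2 - α) ≤ G := by
          rw [hGdef]; exact Real.rpow_le_rpow ha0.le haw (by linarith)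
        have h4 : a ^ (2:ℝ) = a ^ 2 := Real.rpow_two a
        have h5 := mul_le_mul_of_nonneg_left h3 hA0
        have h6 : (2 * a) ^ 2 = 4 * (A * a ^ (2 - α)) := by rw [h2, Real.rpow_two]; ring
        calc θv ^ 2 ≤ (2 * a) ^ 2 := h1
          _ = 4 * (A * a ^ (2 - α)) := h6
          _ ≤ 4 * (A * G) := by linarith
      -- min computation
      have hσ2L : σ ^ (2 - α) ≤ (2*L)⁻¹ := by
        have h1 : σ ≤ (2*L) ^ (-(1/(2-α))) := min_le_right _ _
        calc σ ^ (2-α) ≤ ((2*L) ^ (-(1/(2-α)))) ^ (2-α) :=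
              Real.rpow_le_rpow hσpos.le h1 (by linarith)
          _ = (2*L) ^ (-(1/(2-α)) * (2-α)) := (Real.rpow_mul (by linarith) _ _).symm
          _ = (2*L) ^ (-1:ℝ) := by
              congr 1
              field_simp
          _ = (2*L)⁻¹ := Real.rpow_neg_one _
      have hG2L : G ≤ (2*L)⁻¹ := by
        have := Real.rpow_le_rpow hw0.le hwσ (le_of_lt h2mα)
        rw [hGdef]
        exact le_trans this hσ2L
      have hE2L : E ≤ (2*L)⁻¹ := by
        calc E ≤ 1/M := hE
          _ ≤ (2*L)⁻¹ := by
            rw [one_div]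
            apply inv_anti₀ (by linarith)
            rw [hMdef]; linarith
      have hmin : L * (G + E) ≤ 1 := by
        have h1 : G + E ≤ 2 * (2*L)⁻¹ := by linarith
        have h2 : L * (G + E) ≤ L * (2 * (2*L)⁻¹) := mul_le_mul_of_nonneg_left h1 hL.le
        have h3 : L * (2 * (2*L)⁻¹) = 1 := by
          field_simp
          try ring
        calc L * (G + E) ≤ L * (2 * (2*L)⁻¹) := h2
          _ = 1 := h3
      have hmineq : min (L * (G + E)) 1 = L * (G + E) := min_eq_left hmin
      have hβL : β * L = 6 * C₀ * β + 4 * K + β := by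
        rw [hLdef]; field_simp
      have hfinal : β * |θv| ^ α + K * θv ^ 2 ≤ β * (A * (1 + L * (G + E))) := by
        have c1 : β * |θv| ^ α ≤ β * (A * (1 + 6 * (C₀ * E))) :=
          mul_le_mul_of_nonneg_left hclaim1 hβ.le
        have c2 : K * θv ^ 2 ≤ K * (4 * (A * G)) :=
          mul_le_mul_of_nonneg_left hclaim2 hK.le
        have e1 : β * (A * (1 + L * (G + E))) - β * (A * (1 + 6 * (C₀ * E)))
            - K * (4 * (A * G)) = (β * L - 4 * K) * (A * G) + (β * L - 6 * C₀ * β) * (A * E) := by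
          ring
        have e2 : 0 ≤ (β * L - 4 * K) * (A * G) := by
          apply mul_nonneg _ (mul_nonneg hA0 hG0)
          have := mul_nonneg hC₀.le hβ.le
          linarith
        have e3 : 0 ≤ (β * L - 6 * C₀ * β) * (A * E) := by
          apply mul_nonneg _ (mul_nonneg hA0 hsE0)
          linarith
        linarith
      rw [habs1, habs2, ← hAdef, ← hGdef, hmineq]
      linarith
  -- integrability
  have hspos' : ∀ x ∈ Set.Icc s₀ t, (x:ℝ) ≠ 0 := by
    intro x hx
    have : 1 ≤ x := le_trans hs₁1 (le_trans hs₁s₀ hx.1)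
    linarith
  have huIcc : Set.uIcc s₀ t = Set.Icc s₀ t := Set.uIcc_of_le hst
  have hIntR : IntervalIntegrable (fun s => |Y s / (Real.sqrt 2 * s)| ^ α *
      (1 + min (L * (|Y s / s| ^ (2 - α) + s ^ (-p))) 1)) volume s₀ t := by
    apply ContinuousOn.intervalIntegrable
    rw [huIcc]
    have hc0 : ContinuousOn (fun s : ℝ => s) (Set.Icc s₀ t) := continuousOn_id
    have hden : ∀ x ∈ Set.Icc s₀ t, Real.sqrt 2 * x ≠ 0 := by
      intro x hx
      exact mul_ne_zero (ne_of_gt hs2pos) (hspos' x hx)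
    apply ContinuousOn.mul
    · exact ((hYc.div (continuousOn_const.mul hc0) hden).abs).rpow_const
        (fun x _ => Or.inr hα0.le)
    · apply ContinuousOn.add continuousOn_const
      apply ContinuousOn.inf _ continuousOn_const
      apply ContinuousOn.mul continuousOn_const
      apply ContinuousOn.add
      · exact ((hYc.div hc0 hspos').abs).rpow_const (fun x _ => Or.inr (by linarith))
      · exact hc0.rpow_const (fun x hx => Or.inl (hspos' x hx))
  have hIntL : IntervalIntegrable (fun s => b (angle (X s) (Y s))) volume s₀ t := by
    rw [intervalIntegrable_iff_integrableOn_Icc_of_le hst]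
    have hXm : AEMeasurable X (volume.restrict (Set.Icc s₀ t)) :=
      hXc.aemeasurable measurableSet_Icc
    have hYm : AEMeasurable Y (volume.restrict (Set.Icc s₀ t)) :=
      hYc.aemeasurable measurableSet_Icc
    have hzm : AEMeasurable (fun s => (X s : ℂ) + (Y s : ℂ) * Complex.I)
        (volume.restrict (Set.Icc s₀ t)) :=
      (Complex.measurable_ofReal.comp_aemeasurable hXm).add
        ((Complex.measurable_ofReal.comp_aemeasurable hYm).mul_const Complex.I)
    have ham : AEMeasurable (fun s => b (angle (X s) (Y s)))
        (volume.restrict (Set.Icc s₀ t)) :=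
      hb_meas.comp_aemeasurable (Complex.measurable_arg.comp_aemeasurable hzm)
    apply MeasureTheory.Integrable.mono' (g := fun _ => (1:ℝ))
    · exact integrableOn_const measure_Icc_lt_top.ne
    · exact ham.aestronglyMeasurable
    · refine Filter.Eventually.of_forall fun x => ?_
      rw [Real.norm_eq_abs, abs_le]
      exact ⟨by linarith [(hb_range (angle (X x) (Y x))).1], (hb_range (angle (X x) (Y x))).2⟩
  have hIntL2 : IntervalIntegrable (fun s => 1 - β * (|Y s / (Real.sqrt 2 * s)| ^ α *
      (1 + min (L * (|Y s / s| ^ (2 - α) + s ^ (-p))) 1))) volume s₀ t :=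
    intervalIntegrable_const.sub (hIntR.const_mul β)
  have hmono := intervalIntegral.integral_mono_on hst hIntL2 hIntL key
  have heq : (∫ s in s₀..t, (1 - β * (|Y s / (Real.sqrt 2 * s)| ^ α *
      (1 + min (L * (|Y s / s| ^ (2 - α) + s ^ (-p))) 1))))
      = (t - s₀) - β * ∫ s in s₀..t, |Y s / (Real.sqrt 2 * s)| ^ α *
        (1 + min (L * (|Y s / s| ^ (2 - α) + s ^ (-p))) 1) := by
    rw [intervalIntegral.integral_sub intervalIntegrable_const (hIntR.const_mul β),
      intervalIntegral.integral_const_mul, intervalIntegral.integral_const]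
    simp [smul_eq_mul]
  rw [heq] at hmono
  exact hmono
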